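/- Let k be a field, let R = k[[t⁵, t⁶, t¹³, t¹⁴]] ⊆ k[[t]] with maximal ideal m = (t⁵, t⁶, t¹³, t¹⁴), let I = (t¹⁰, t¹¹, t¹²), and let L = (t⁵, t¹², t¹³, t¹⁴). Then: (a) the kernel of the R-linear surjection R^{⊕3} → I sending e₁ ↦ t¹⁰, e₂ ↦ t¹¹, e₃ ↦ t¹² (the first syzygy module Ω¹_R(I)) is isomorphic to L ⊕ L as an R-module; (b) tr_R(L) = m. -/

import Mathlib

universe u

set_option synthInstance.maxHeartbeats 1000000
set_option maxHeartbeats 1000000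

open PowerSeries

/-- The numerical semigroup `⟨5, 6, 13, 14⟩`. -/
def sgp : AddSubmonoid ℕ := AddSubmonoid.closure {5, 6, 13, 14}

/-- The complete numerical semigroup ring `k[[t⁵, t⁶, t¹³, t¹⁴]]`: the subalgebra of `k[[t]]`
consisting of power series supported on the numerical semigroup `⟨5, 6, 13, 14⟩`. -/
noncomputable def cnsRing (k : Type u) [Field k] : Subalgebra k (PowerSeries k) where
  carrier := {f | ∀ d : ℕ, coeff d f ≠ 0 → d ∈ sgp}
  add_mem' {f g} hf hg d hd := by
    rw [map_add] at hd
    by_cases h : coeff d f ≠ 0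
    · exact hf d h
    · push_neg at h
      exact hg d (by simpa [h] using hd)
  mul_mem' {f g} hf hg d hd := by
    rw [coeff_mul] at hd
    obtain ⟨p, hp, hne⟩ := Finset.exists_ne_zero_of_sum_ne_zero hd
    rw [Finset.HasAntidiagonal.mem_antidiagonal] at hp
    exact hp ▸ add_mem (hf p.1 (left_ne_zero_of_mul hne)) (hg p.2 (right_ne_zero_of_mul hne))
  one_mem' d hd := by
    rw [coeff_one] at hd
    simp only [ne_eq, ite_eq_right_iff, not_forall] at hd
    exact hd.1 ▸ zero_mem sgp
  algebraMap_mem' c d hd := by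
    rw [PowerSeries.algebraMap_apply, coeff_C] at hd
    simp only [ne_eq, ite_eq_right_iff, not_forall] at hd
    exact hd.1 ▸ zero_mem sgp

/-- The element `t^d` of `k[[t⁵, t⁶, t¹³, t¹⁴]]`, for `d` in the semigroup `⟨5, 6, 13, 14⟩`. -/
noncomputable def tp (k : Type u) [Field k] (d : ℕ) (hd : d ∈ sgp) : ↥(cnsRing k) :=
  ⟨PowerSeries.X ^ d, fun e he => by
    rw [coeff_X_pow] at he
    simp only [ne_eq, ite_eq_right_iff, not_forall] at he
    exact he.1 ▸ hd⟩

lemma mem5 : (5 : ℕ) ∈ sgp := AddSubmonoid.subset_closure (by norm_num)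
lemma mem6 : (6 : ℕ) ∈ sgp := AddSubmonoid.subset_closure (by norm_num)
lemma mem13 : (13 : ℕ) ∈ sgp := AddSubmonoid.subset_closure (by norm_num)
lemma mem14 : (14 : ℕ) ∈ sgp := AddSubmonoid.subset_closure (by norm_num)
lemma mem10 : (10 : ℕ) ∈ sgp := by have h := add_mem mem5 mem5; norm_num at h; exact h
lemma mem11 : (11 : ℕ) ∈ sgp := by have h := add_mem mem5 mem6; norm_num at h; exact h
lemma mem12 : (12 : ℕ) ∈ sgp := by have h := add_mem mem6 mem6; norm_num at h; exact h

/-- The trace ideal of an `R`-module `M`: the ideal of `R` generated by all values `f(m)`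
for `f ∈ Hom_R(M, R)` and `m ∈ M`. -/
def traceIdeal (R : Type*) (M : Type*) [CommRing R] [AddCommGroup M] [Module R M] : Ideal R :=
  Ideal.span {r : R | ∃ (f : M →ₗ[R] R) (m : M), f m = r}


lemma sgp_iff (d : ℕ) : d ∈ sgp ↔ d = 0 ∨ d = 5 ∨ d = 6 ∨ 10 ≤ d := by
  constructor
  · intro h
    induction h using AddSubmonoid.closure_induction with
    | mem x hx => rcases hx with h|h|h|h <;> simp_all <;> omega
    | zero => left; rfl
    | add a b _ _ ha hb => omega
  · rintro (rfl|rfl|rfl|h)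
    · exact zero_mem _
    · exact AddSubmonoid.subset_closure (by norm_num)
    · exact AddSubmonoid.subset_closure (by norm_num)
    · -- every n ≥ 10 is in sgp
      have m5 : (5:ℕ) ∈ sgp := AddSubmonoid.subset_closure (by norm_num)
      have m6 : (6:ℕ) ∈ sgp := AddSubmonoid.subset_closure (by norm_num)
      have m13 : (13:ℕ) ∈ sgp := AddSubmonoid.subset_closure (by norm_num)
      have m14 : (14:ℕ) ∈ sgp := AddSubmonoid.subset_closure (by norm_num)
      have key : ∀ q r : ℕ, r < 5 → 2 ≤ q → 5 * q + r ∈ sgp := by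
        intro q r hr hq
        interval_cases r
        · have := AddSubmonoid.nsmul_mem sgp m5 q; simpa [smul_eq_mul, Nat.mul_comm] using this
        · have : 5 * q + 1 = 6 + 5 * (q - 1) := by omega
          rw [this]
          exact add_mem m6 (by have := AddSubmonoid.nsmul_mem sgp m5 (q-1); simpa [smul_eq_mul, Nat.mul_comm] using this)
        · have : 5 * q + 2 = 6 + 6 + 5 * (q - 2) := by omega
          rw [this]
          exact add_mem (add_mem m6 m6) (by have := AddSubmonoid.nsmul_mem sgp m5 (q-2); simpa [smul_eq_mul, Nat.mul_comm] using this)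
        · have : 5 * q + 3 = 13 + 5 * (q - 2) := by omega
          rw [this]
          exact add_mem m13 (by have := AddSubmonoid.nsmul_mem sgp m5 (q-2); simpa [smul_eq_mul, Nat.mul_comm] using this)
        · have : 5 * q + 4 = 14 + 5 * (q - 2) := by omega
          rw [this]
          exact add_mem m14 (by have := AddSubmonoid.nsmul_mem sgp m5 (q-2); simpa [smul_eq_mul, Nat.mul_comm] using this)
      have h1 : d = 5 * (d / 5) + d % 5 := (Nat.div_add_mod d 5).symm
      rw [h1]
      exact key _ _ (Nat.mod_lt _ (by norm_num)) (by omega)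

variable {k : Type u} [Field k]
variable {k : Type u} [Field k]

lemma cns_coeff_zero (x : ↥(cnsRing k)) {d : ℕ} (hd : ¬ (d = 0 ∨ d = 5 ∨ d = 6 ∨ 10 ≤ d)) :
    coeff d (x : PowerSeries k) = 0 := by
  by_contra h
  exact hd ((sgp_iff d).1 (x.2 d h))
section
variable {k : Type u} [Field k]

noncomputable abbrev Lspan (k : Type u) [Field k] : Ideal ↥(cnsRing k) :=
  Ideal.span {tp k 5 mem5, tp k 12 mem12, tp k 13 mem13, tp k 14 mem14}

noncomputable abbrev mspan (k : Type u) [Field k] : Ideal ↥(cnsRing k) :=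
  Ideal.span {tp k 5 mem5, tp k 6 mem6, tp k 13 mem13, tp k 14 mem14}

noncomputable def Lset (k : Type u) [Field k] : Ideal ↥(cnsRing k) where
  carrier := {x | coeff 0 (x : PowerSeries k) = 0 ∧ coeff 6 (x : PowerSeries k) = 0}
  add_mem' {a b} ha hb := by
    constructor <;> simp_all [map_add]
  zero_mem' := by simp
  smul_mem' r x hx := by
    obtain ⟨hx0, hx6⟩ := hx
    have hval : ((r • x : ↥(cnsRing k)) : PowerSeries k) = (r : PowerSeries k) * (x : PowerSeries k) := rfl
    constructor
    · rw [hval, coeff_mul]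
      apply Finset.sum_eq_zero
      intro p hp
      rw [Finset.HasAntidiagonal.mem_antidiagonal] at hp
      have : p.2 = 0 := by omega
      rw [this, hx0, mul_zero]
    · rw [hval, coeff_mul]
      apply Finset.sum_eq_zero
      intro p hp
      rw [Finset.HasAntidiagonal.mem_antidiagonal] at hp
      by_cases h : coeff p.2 (x : PowerSeries k) = 0
      · rw [h, mul_zero]
      have hj := (sgp_iff p.2).1 (x.2 p.2 h)
      rcases hj with h2|h2|h2|h2
      · rw [h2] at h; exact absurd hx0 h
      · have : p.1 = 1 := by omega
        rw [this, cns_coeff_zero r (by omega), zero_mul]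
      · rw [h2] at h; exact absurd hx6 h
      · omega

lemma mem_Lset_iff {x : ↥(cnsRing k)} :
    x ∈ Lset k ↔ coeff 0 (x : PowerSeries k) = 0 ∧ coeff 6 (x : PowerSeries k) = 0 :=
  Iff.rfl

lemma tp_coeff (d n : ℕ) (hn : n ∈ sgp) :
    coeff d ((tp k n hn : ↥(cnsRing k)) : PowerSeries k) = if d = n then 1 else 0 := by
  simp [tp, coeff_X_pow, eq_comm]

lemma Lspan_le_Lset : Lspan k ≤ Lset k := by
  rw [Ideal.span_le]
  rintro x (rfl|rfl|rfl|rfl) <;> constructor <;> simp [mem_Lset_iff, tp_coeff]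

end
section
variable {k : Type u} [Field k]

/-- the quotient-by-t^5 approximation used in the decomposition -/
noncomputable def shift5 (x : ↥(cnsRing k)) : ↥(cnsRing k) :=
  ⟨PowerSeries.mk (fun d => if d = 0 ∨ d = 5 ∨ d = 6 ∨ 10 ≤ d then coeff (d+5) (x : PowerSeries k) else 0),
   fun d hd => by
     rw [coeff_mk] at hd
     rw [sgp_iff]
     by_contra h
     simp [h] at hd⟩

noncomputable def cnsC (c : k) : ↥(cnsRing k) := algebraMap k (cnsRing k) c

lemma cnsC_val (c : k) : ((cnsC c : ↥(cnsRing k)) : PowerSeries k) = C c := rfl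

lemma Lset_le_Lspan : Lset k ≤ Lspan k := by
  intro x hx
  obtain ⟨hx0, hx6⟩ := hx
  have key : x = shift5 x * tp k 5 mem5 + cnsC (coeff 12 (x:PowerSeries k)) * tp k 12 mem12
      + cnsC (coeff 13 (x:PowerSeries k)) * tp k 13 mem13
      + cnsC (coeff 14 (x:PowerSeries k)) * tp k 14 mem14 := by
    apply Subtype.ext
    apply PowerSeries.ext
    intro d
    push_cast [MulMemClass.coe_mul, AddMemClass.coe_add]
    rw [cnsC_val, cnsC_val, cnsC_val]
    show coeff d _ = coeff d (((shift5 x : ↥(cnsRing k)) : PowerSeries k) * X ^ 5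
      + C _ * X ^ 12 + C _ * X ^ 13 + C _ * X ^ 14)
    rw [map_add, map_add, map_add, coeff_mul_X_pow', coeff_C_mul_X_pow, coeff_C_mul_X_pow,
      coeff_C_mul_X_pow]
    have g1 := cns_coeff_zero x (d := 1) (by omega)
    have g2 := cns_coeff_zero x (d := 2) (by omega)
    have g3 := cns_coeff_zero x (d := 3) (by omega)
    have g4 := cns_coeff_zero x (d := 4) (by omega)
    have g7 := cns_coeff_zero x (d := 7) (by omega)
    have g8 := cns_coeff_zero x (d := 8) (by omega)
    have g9 := cns_coeff_zero x (d := 9) (by omega)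
    by_cases hd : d < 15
    · interval_cases d <;>
        simp_all [shift5, coeff_mk, coeff_zero_eq_constantCoeff]
    · have h5 : 5 ≤ d := by omega
      have hcond : d - 5 = 0 ∨ d - 5 = 5 ∨ d - 5 = 6 ∨ 10 ≤ d - 5 := by omega
      simp only [if_pos h5, shift5, coeff_mk, if_pos hcond]
      have : d - 5 + 5 = d := by omega
      rw [this]
      have h12 : ¬ d = 12 := by omega
      have h13 : ¬ d = 13 := by omega
      have h14 : ¬ d = 14 := by omega
      simp [h12, h13, h14]
  rw [key]
  have g5 : tp k 5 mem5 ∈ Lspan k := Ideal.subset_span (by simp)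
  have g12 : tp k 12 mem12 ∈ Lspan k := Ideal.subset_span (by simp)
  have g13 : tp k 13 mem13 ∈ Lspan k := Ideal.subset_span (by simp)
  have g14 : tp k 14 mem14 ∈ Lspan k := Ideal.subset_span (by simp)
  exact add_mem (add_mem (add_mem (Ideal.mul_mem_left _ _ g5) (Ideal.mul_mem_left _ _ g12))
    (Ideal.mul_mem_left _ _ g13)) (Ideal.mul_mem_left _ _ g14)

lemma mem_Lspan_iff {x : ↥(cnsRing k)} :
    x ∈ Lspan k ↔ coeff 0 (x : PowerSeries k) = 0 ∧ coeff 6 (x : PowerSeries k) = 0 :=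
  ⟨fun h => Lspan_le_Lset h, fun h => Lset_le_Lspan h⟩

end
section
variable {k : Type u} [Field k]

lemma mspan_le_ker : mspan k ≤ RingHom.ker ((constantCoeff).comp (Subalgebra.val (cnsRing k)).toRingHom) := by
  rw [Ideal.span_le]
  rintro x (rfl|rfl|rfl|rfl) <;>
    simp [RingHom.mem_ker, tp, ← coeff_zero_eq_constantCoeff, coeff_X_pow]

lemma Lspan_le_mspan : Lspan k ≤ mspan k := by
  rw [Ideal.span_le]
  rintro x (rfl|rfl|rfl|rfl)
  · exact Ideal.subset_span (by simp)
  · have : tp k 12 mem12 = tp k 6 mem6 * tp k 6 mem6 := by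
      apply Subtype.ext
      show (X : PowerSeries k) ^ 12 = X ^ 6 * X ^ 6
      ring
    rw [this]
    exact Ideal.mul_mem_left _ _ (Ideal.subset_span (by simp))
  · exact Ideal.subset_span (by simp)
  · exact Ideal.subset_span (by simp)

lemma mem_mspan_iff {x : ↥(cnsRing k)} :
    x ∈ mspan k ↔ coeff 0 (x : PowerSeries k) = 0 := by
  constructor
  · intro h
    have := mspan_le_ker h
    simpa [RingHom.mem_ker, ← coeff_zero_eq_constantCoeff] using this
  · intro h0
    set c := coeff 6 (x : PowerSeries k) with hc
    have hL : x - cnsC c * tp k 6 mem6 ∈ Lspan k := by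
      rw [mem_Lspan_iff]
      constructor
      · push_cast [MulMemClass.coe_mul, AddSubgroupClass.coe_sub]
        rw [cnsC_val]
        show coeff 0 ((x : PowerSeries k) - C c * X ^ 6) = 0
        rw [map_sub, coeff_C_mul_X_pow, h0]
        norm_num
      · push_cast [MulMemClass.coe_mul, AddSubgroupClass.coe_sub]
        rw [cnsC_val]
        show coeff 6 ((x : PowerSeries k) - C c * X ^ 6) = 0
        rw [map_sub, coeff_C_mul_X_pow, ← hc]
        norm_num
    have h6 : cnsC c * tp k 6 mem6 ∈ mspan k :=
      Ideal.mul_mem_left _ _ (Ideal.subset_span (by simp))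
    have := add_mem (Lspan_le_mspan hL) h6
    simpa using this

end

section
variable {k : Type u} [Field k]

lemma tp5_mem_L : tp k 5 mem5 ∈ Lspan k := Ideal.subset_span (by simp)
lemma tp12_mem_L : tp k 12 mem12 ∈ Lspan k := Ideal.subset_span (by simp)
lemma tp13_mem_L : tp k 13 mem13 ∈ Lspan k := Ideal.subset_span (by simp)
lemma tp14_mem_L : tp k 14 mem14 ∈ Lspan k := Ideal.subset_span (by simp)

/-- multiplication by `t` as a map `L → R` -/
noncomputable def mulX : ↥(Lspan k) →ₗ[↥(cnsRing k)] ↥(cnsRing k) where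
  toFun x := ⟨((x : ↥(cnsRing k)) : PowerSeries k) * X, by
    intro d hd
    match d with
    | 0 => rw [coeff_zero_mul_X] at hd; exact absurd rfl hd
    | (n+1) =>
      rw [coeff_succ_mul_X] at hd
      have hn : n ∈ sgp := (x : ↥(cnsRing k)).2 n hd
      have hx := mem_Lspan_iff.1 x.2
      have hn0 : n ≠ 0 := fun h => hd (h ▸ hx.1)
      have hn6 : n ≠ 6 := fun h => hd (h ▸ hx.2)
      rw [sgp_iff] at hn ⊢
      omega⟩
  map_add' a b := by
    apply Subtype.ext
    show (((a + b : ↥(Lspan k)) : ↥(cnsRing k)) : PowerSeries k) * X = _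
    push_cast [Submodule.coe_add, AddMemClass.coe_add]
    ring
  map_smul' r a := by
    apply Subtype.ext
    show (((r • a : ↥(Lspan k)) : ↥(cnsRing k)) : PowerSeries k) * X = _
    push_cast [SetLike.val_smul, smul_eq_mul, MulMemClass.coe_mul]
    simp only [id]
    ring

lemma trace_symm (f : ↥(Lspan k) →ₗ[↥(cnsRing k)] ↥(cnsRing k)) (w z : ↥(Lspan k)) :
    (w : ↥(cnsRing k)) * f z = (z : ↥(cnsRing k)) * f w := by
  have h1 : (w : ↥(cnsRing k)) • z = (z : ↥(cnsRing k)) • w := by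
    apply Subtype.ext
    show (w : ↥(cnsRing k)) * (z : ↥(cnsRing k)) = (z : ↥(cnsRing k)) * (w : ↥(cnsRing k))
    ring
  calc (w : ↥(cnsRing k)) * f z = f ((w : ↥(cnsRing k)) • z) := (map_smul f _ z).symm
    _ = f ((z : ↥(cnsRing k)) • w) := by rw [h1]
    _ = (z : ↥(cnsRing k)) * f w := map_smul f _ w

lemma trace_eq_m : traceIdeal ↥(cnsRing k) ↥(Lspan k) = mspan k := by
  apply le_antisymm
  · rw [traceIdeal, Ideal.span_le]
    rintro r ⟨f, z, rfl⟩
    rw [SetLike.mem_coe, mem_mspan_iff]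
    set w5 : ↥(Lspan k) := ⟨tp k 5 mem5, tp5_mem_L⟩
    set w12 : ↥(Lspan k) := ⟨tp k 12 mem12, tp12_mem_L⟩
    -- step 1 : constant coefficient of f(t^12) is 0
    have step1 : coeff 0 ((f w12 : ↥(cnsRing k)) : PowerSeries k) = 0 := by
      have h := trace_symm f w5 w12
      have hval := congrArg (fun y : ↥(cnsRing k) => coeff 5 (y : PowerSeries k)) h
      simp only [MulMemClass.coe_mul] at hval
      have lhs : coeff 5 (((w5 : ↥(cnsRing k)) : PowerSeries k) * ((f w12 : ↥(cnsRing k)) : PowerSeries k))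
          = coeff 0 ((f w12 : ↥(cnsRing k)) : PowerSeries k) := by
        show coeff 5 ((X : PowerSeries k) ^ 5 * _) = _
        rw [coeff_X_pow_mul']
        norm_num
      have rhs : coeff 5 (((w12 : ↥(cnsRing k)) : PowerSeries k) * ((f w5 : ↥(cnsRing k)) : PowerSeries k)) = 0 := by
        show coeff 5 ((X : PowerSeries k) ^ 12 * _) = 0
        rw [coeff_X_pow_mul']
        norm_num
      rw [lhs, rhs] at hval
      exact hval
    -- step 2
    have h := trace_symm f w12 z
    have hval := congrArg (fun y : ↥(cnsRing k) => coeff 12 (y : PowerSeries k)) h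
    simp only [MulMemClass.coe_mul] at hval
    have lhs : coeff 12 (((w12 : ↥(cnsRing k)) : PowerSeries k) * ((f z : ↥(cnsRing k)) : PowerSeries k))
        = coeff 0 ((f z : ↥(cnsRing k)) : PowerSeries k) := by
      show coeff 12 ((X : PowerSeries k) ^ 12 * _) = _
      rw [coeff_X_pow_mul']
      norm_num
    have rhs : coeff 12 (((z : ↥(cnsRing k)) : PowerSeries k) * ((f w12 : ↥(cnsRing k)) : PowerSeries k)) = 0 := by
      rw [coeff_mul]
      apply Finset.sum_eq_zero
      intro p hp
      rw [Finset.HasAntidiagonal.mem_antidiagonal] at hp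
      by_cases h1 : coeff p.1 ((z : ↥(cnsRing k)) : PowerSeries k) = 0
      · rw [h1, zero_mul]
      by_cases h2 : coeff p.2 ((f w12 : ↥(cnsRing k)) : PowerSeries k) = 0
      · rw [h2, mul_zero]
      exfalso
      have hz := mem_Lspan_iff.1 z.2
      have hp1 : p.1 ∈ sgp := (z : ↥(cnsRing k)).2 p.1 h1
      have hp10 : p.1 ≠ 0 := fun h => h1 (h ▸ hz.1)
      have hp16 : p.1 ≠ 6 := fun h => h1 (h ▸ hz.2)
      have hp2 : p.2 ∈ sgp := (f w12 : ↥(cnsRing k)).2 p.2 h2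
      rw [sgp_iff] at hp1 hp2
      have : p.2 = 0 := by omega
      exact h2 (this ▸ step1)
    rw [lhs, rhs] at hval
    exact hval
  · rw [Ideal.span_le]
    have hincl : ∀ (z : ↥(Lspan k)), ((Lspan k).subtype z : ↥(cnsRing k)) ∈ traceIdeal ↥(cnsRing k) ↥(Lspan k) :=
      fun z => Ideal.subset_span ⟨(Lspan k).subtype, z, rfl⟩
    rintro x (rfl|rfl|rfl|rfl)
    · exact hincl ⟨tp k 5 mem5, tp5_mem_L⟩
    · have : tp k 6 mem6 = mulX (k := k) ⟨tp k 5 mem5, tp5_mem_L⟩ := by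
        apply Subtype.ext
        show (X : PowerSeries k) ^ 6 = X ^ 5 * X
        rw [← pow_succ]
      rw [this]
      exact Ideal.subset_span ⟨mulX (k := k), _, rfl⟩
    · exact hincl ⟨tp k 13 mem13, tp13_mem_L⟩
    · exact hincl ⟨tp k 14 mem14, tp14_mem_L⟩

end
section
variable {k : Type u} [Field k]

noncomputable def lin3 (k : Type u) [Field k] :
    (Fin 3 → ↥(cnsRing k)) →ₗ[↥(cnsRing k)] ↥(cnsRing k) :=
  Fintype.linearCombination ↥(cnsRing k) ![tp k 10 mem10, tp k 11 mem11, tp k 12 mem12]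

lemma mem_ker_iff (g : Fin 3 → ↥(cnsRing k)) :
    g ∈ LinearMap.ker (lin3 k) ↔
      ((g 0 : PowerSeries k)) * X ^ 10 + ((g 1 : PowerSeries k)) * X ^ 11
        + ((g 2 : PowerSeries k)) * X ^ 12 = 0 := by
  rw [LinearMap.mem_ker, lin3, Fintype.linearCombination_apply, Fin.sum_univ_three]
  simp only [Matrix.cons_val_zero, Matrix.cons_val_one, Matrix.head_cons, smul_eq_mul,
    Matrix.cons_val_two, Matrix.tail_cons]
  rw [Subtype.ext_iff]
  rfl

/-- coefficient relation extracted from a kernel element -/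
lemma ker_rel {g : Fin 3 → ↥(cnsRing k)} (hg : g ∈ LinearMap.ker (lin3 k)) (n : ℕ) :
    coeff (n + 2) ((g 0 : PowerSeries k)) + coeff (n + 1) ((g 1 : PowerSeries k))
      + coeff n ((g 2 : PowerSeries k)) = 0 := by
  have h := (mem_ker_iff g).1 hg
  have := congrArg (coeff (n + 12)) h
  simp only [map_add, coeff_mul_X_pow', map_zero] at this
  have e1 : n + 12 - 10 = n + 2 := by omega
  have e2 : n + 12 - 11 = n + 1 := by omega
  have e3 : n + 12 - 12 = n := by omega
  rw [if_pos (by omega), if_pos (by omega), if_pos (by omega), e1, e2, e3] at this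
  exact this

lemma ker_rel0 {g : Fin 3 → ↥(cnsRing k)} (hg : g ∈ LinearMap.ker (lin3 k)) :
    coeff 1 ((g 0 : PowerSeries k)) + coeff 0 ((g 1 : PowerSeries k)) = 0 := by
  have h := (mem_ker_iff g).1 hg
  have := congrArg (coeff 11) h
  simp only [map_add, coeff_mul_X_pow', map_zero] at this
  rw [if_pos (by omega), if_pos (by omega), if_neg (by omega)] at this
  norm_num at this
  convert this using 2 <;> norm_num

/-- the `u = b + c·t` component of the forward map -/
lemma u_supp {g : Fin 3 → ↥(cnsRing k)} (hg : g ∈ LinearMap.ker (lin3 k)) (d : ℕ)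
    (hd : coeff d ((g 1 : PowerSeries k) + (g 2 : PowerSeries k) * X) ≠ 0) :
    d = 5 ∨ 10 ≤ d := by
  match d with
  | 0 =>
    exfalso
    rw [map_add, coeff_zero_mul_X, add_zero] at hd
    have h1 : coeff 1 ((g 0 : PowerSeries k)) = 0 := cns_coeff_zero _ (by omega)
    have := ker_rel0 hg
    rw [h1, zero_add] at this
    exact hd this
  | (n+1) =>
    rw [map_add, coeff_succ_mul_X] at hd
    have hrel := ker_rel hg n
    -- n+2 ∈ sgp
    have ha : coeff (n + 2) ((g 0 : PowerSeries k)) ≠ 0 := by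
      intro h0
      rw [h0, zero_add] at hrel
      exact hd hrel
    have h2 : (n : ℕ) + 2 ∈ sgp := (g 0).2 _ ha
    have h3 : (n + 1) ∈ sgp ∨ n ∈ sgp := by
      by_cases hb : coeff (n + 1) ((g 1 : PowerSeries k)) = 0
      · right
        apply (g 2).2
        intro hc
        rw [hb, hc, add_zero] at hd
        exact hd rfl
      · left; exact (g 1).2 _ hb
    rw [sgp_iff] at h2
    rcases h3 with h3|h3 <;> rw [sgp_iff] at h3 <;> omega

/-- forward map -/
noncomputable def fwd (g : ↥(LinearMap.ker (lin3 k))) : ↥(Lspan k) × ↥(Lspan k) := by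
  refine (⟨⟨(g.1 1 : PowerSeries k) + (g.1 2 : PowerSeries k) * X, ?_⟩, ?_⟩,
          ⟨g.1 2, ?_⟩)
  · intro d hd
    have := u_supp g.2 d hd
    rw [sgp_iff]; omega
  · rw [mem_Lspan_iff]
    constructor
    · by_contra h
      have := u_supp g.2 0 h; omega
    · by_contra h
      have := u_supp g.2 6 h; omega
  · rw [mem_Lspan_iff]
    have hrel12 := ker_rel g.2 0
    have hrel18 := ker_rel g.2 6
    constructor
    · have h1 : coeff 2 ((g.1 0 : PowerSeries k)) = 0 := cns_coeff_zero _ (by omega)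
      have h2 : coeff 1 ((g.1 1 : PowerSeries k)) = 0 := cns_coeff_zero _ (by omega)
      rw [h1, h2] at hrel12
      simpa using hrel12
    · have h1 : coeff 8 ((g.1 0 : PowerSeries k)) = 0 := cns_coeff_zero _ (by omega)
      have h2 : coeff 7 ((g.1 1 : PowerSeries k)) = 0 := cns_coeff_zero _ (by omega)
      rw [h1, h2] at hrel18
      simpa using hrel18

/-- backward map components -/
noncomputable def bwdA (u : ↥(Lspan k)) : ↥(cnsRing k) :=
  ⟨-(((u : ↥(cnsRing k)) : PowerSeries k) * X), by
    intro d hd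
    rw [map_neg, neg_ne_zero] at hd
    match d with
    | 0 => rw [coeff_zero_mul_X] at hd; exact absurd rfl hd
    | (n+1) =>
      rw [coeff_succ_mul_X] at hd
      have hn : n ∈ sgp := (u : ↥(cnsRing k)).2 n hd
      have hu := mem_Lspan_iff.1 u.2
      have hn0 : n ≠ 0 := fun h => hd (h ▸ hu.1)
      have hn6 : n ≠ 6 := fun h => hd (h ▸ hu.2)
      rw [sgp_iff] at hn ⊢
      omega⟩

noncomputable def bwdB (u c : ↥(Lspan k)) : ↥(cnsRing k) :=
  ⟨((u : ↥(cnsRing k)) : PowerSeries k) - ((c : ↥(cnsRing k)) : PowerSeries k) * X, by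
    intro d hd
    rw [map_sub, sub_ne_zero] at hd
    rw [sgp_iff]
    by_cases h1 : coeff d ((u : ↥(cnsRing k)) : PowerSeries k) = 0
    · match d with
      | 0 => rw [h1, coeff_zero_mul_X] at hd; exact absurd rfl hd
      | (n+1) =>
        rw [coeff_succ_mul_X] at hd
        have hn : n ∈ sgp := by
          apply (c : ↥(cnsRing k)).2
          intro h
          rw [h1, h] at hd; exact hd rfl
        have hc := mem_Lspan_iff.1 c.2
        have hn0 : n ≠ 0 := by rintro rfl; rw [h1, hc.1] at hd; exact hd rfl
        have hn6 : n ≠ 6 := by rintro rfl; rw [h1, hc.2] at hd; exact hd rfl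
        rw [sgp_iff] at hn
        omega
    · have hn : d ∈ sgp := (u : ↥(cnsRing k)).2 d h1
      have hu := mem_Lspan_iff.1 u.2
      have hn0 : d ≠ 0 := fun h => h1 (h ▸ hu.1)
      have hn6 : d ≠ 6 := fun h => h1 (h ▸ hu.2)
      rw [sgp_iff] at hn
      omega⟩

noncomputable def bwd (p : ↥(Lspan k) × ↥(Lspan k)) : ↥(LinearMap.ker (lin3 k)) :=
  ⟨![bwdA p.1, bwdB p.1 p.2, (p.2 : ↥(cnsRing k))], by
    rw [mem_ker_iff]
    simp only [Matrix.cons_val_zero, Matrix.cons_val_one, Matrix.head_cons,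
      Matrix.cons_val_two, Matrix.tail_cons]
    show (-(((p.1 : ↥(cnsRing k)) : PowerSeries k) * X)) * X ^ 10
        + (((p.1 : ↥(cnsRing k)) : PowerSeries k) - ((p.2 : ↥(cnsRing k)) : PowerSeries k) * X) * X ^ 11
        + ((p.2 : ↥(cnsRing k)) : PowerSeries k) * X ^ 12 = 0
    ring⟩

end

section
variable {k : Type u} [Field k]

set_option maxHeartbeats 4000000 in
noncomputable def theEquiv (k : Type u) [Field k] :
    ↥(LinearMap.ker (lin3 k)) ≃ₗ[↥(cnsRing k)] ↥(Lspan k) × ↥(Lspan k) where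
  toFun := fwd
  invFun := bwd
  map_add' g h := by
    have e1 : ∀ i, ((((g + h : ↥(LinearMap.ker (lin3 k))) : Fin 3 → ↥(cnsRing k)) i : PowerSeries k))
        = ((g : Fin 3 → ↥(cnsRing k)) i : PowerSeries k) + ((h : Fin 3 → ↥(cnsRing k)) i : PowerSeries k) := by
      intro i
      rw [Submodule.coe_add, Pi.add_apply, AddMemClass.coe_add]
    refine Prod.ext (Subtype.ext (Subtype.ext ?_)) (Subtype.ext (Subtype.ext ?_))
    · show (((g + h : ↥(LinearMap.ker (lin3 k))) : Fin 3 → ↥(cnsRing k)) 1 : PowerSeries k)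
        + (((g + h : ↥(LinearMap.ker (lin3 k))) : Fin 3 → ↥(cnsRing k)) 2 : PowerSeries k) * X = _
      rw [e1, e1]
      show _ = (((g : Fin 3 → ↥(cnsRing k)) 1 : PowerSeries k) + ((g : Fin 3 → ↥(cnsRing k)) 2 : PowerSeries k) * X)
        + (((h : Fin 3 → ↥(cnsRing k)) 1 : PowerSeries k) + ((h : Fin 3 → ↥(cnsRing k)) 2 : PowerSeries k) * X)
      ring
    · show (((g + h : ↥(LinearMap.ker (lin3 k))) : Fin 3 → ↥(cnsRing k)) 2 : PowerSeries k) = _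
      rw [e1]
      rfl
  map_smul' r g := by
    have e1 : ∀ i, ((((r • g : ↥(LinearMap.ker (lin3 k))) : Fin 3 → ↥(cnsRing k)) i : PowerSeries k))
        = ((r : PowerSeries k)) * ((g : Fin 3 → ↥(cnsRing k)) i : PowerSeries k) := by
      intro i
      rw [SetLike.val_smul, Pi.smul_apply, smul_eq_mul, MulMemClass.coe_mul]
    refine Prod.ext (Subtype.ext (Subtype.ext ?_)) (Subtype.ext (Subtype.ext ?_))
    · show (((r • g : ↥(LinearMap.ker (lin3 k))) : Fin 3 → ↥(cnsRing k)) 1 : PowerSeries k)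
        + (((r • g : ↥(LinearMap.ker (lin3 k))) : Fin 3 → ↥(cnsRing k)) 2 : PowerSeries k) * X = _
      rw [e1, e1]
      show _ = (r : PowerSeries k) *
        (((g : Fin 3 → ↥(cnsRing k)) 1 : PowerSeries k) + ((g : Fin 3 → ↥(cnsRing k)) 2 : PowerSeries k) * X)
      ring
    · show (((r • g : ↥(LinearMap.ker (lin3 k))) : Fin 3 → ↥(cnsRing k)) 2 : PowerSeries k) = _
      rw [e1]
      rfl
  left_inv g := by
    have rel := (mem_ker_iff _).1 g.2
    apply Subtype.ext
    funext i
    fin_cases i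
    · show bwdA (fwd g).1 = (g : Fin 3 → ↥(cnsRing k)) 0
      apply Subtype.ext
      show -((((g : Fin 3 → ↥(cnsRing k)) 1 : PowerSeries k)
          + ((g : Fin 3 → ↥(cnsRing k)) 2 : PowerSeries k) * X) * X)
        = ((g : Fin 3 → ↥(cnsRing k)) 0 : PowerSeries k)
      have h10 : (X : PowerSeries k) ^ 10 ≠ 0 := pow_ne_zero _ X_ne_zero
      apply mul_right_cancel₀ h10
      linear_combination -rel
    · show bwdB (fwd g).1 (fwd g).2 = (g : Fin 3 → ↥(cnsRing k)) 1
      apply Subtype.ext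
      show (((g : Fin 3 → ↥(cnsRing k)) 1 : PowerSeries k)
          + ((g : Fin 3 → ↥(cnsRing k)) 2 : PowerSeries k) * X)
        - ((g : Fin 3 → ↥(cnsRing k)) 2 : PowerSeries k) * X
        = ((g : Fin 3 → ↥(cnsRing k)) 1 : PowerSeries k)
      ring
    · rfl
  right_inv p := by
    refine Prod.ext (Subtype.ext (Subtype.ext ?_)) rfl
    show (((p.1 : ↥(cnsRing k)) : PowerSeries k) - ((p.2 : ↥(cnsRing k)) : PowerSeries k) * X)
        + ((p.2 : ↥(cnsRing k)) : PowerSeries k) * X = ((p.1 : ↥(cnsRing k)) : PowerSeries k)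
    ring

end

/-- Let `k` be a field, `R = k[[t⁵,t⁶,t¹³,t¹⁴]]` with maximal ideal
`m = (t⁵,t⁶,t¹³,t¹⁴)`, `I = (t¹⁰,t¹¹,t¹²)` and `L = (t⁵,t¹²,t¹³,t¹⁴)`.  Then:
(a) the kernel of `R^{⊕3} → I`, `e₁ ↦ t¹⁰, e₂ ↦ t¹¹, e₃ ↦ t¹²` (the first syzygy module
    `Ω¹_R(I)`) is isomorphic to `L ⊕ L` as an `R`-module;
(b) `tr_R(L) = m`. -/
theorem syzygy_of_canonical_ideal (k : Type u) [Field k] :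
    Nonempty
      (↥(LinearMap.ker (Fintype.linearCombination ↥(cnsRing k)
          ![tp k 10 mem10, tp k 11 mem11, tp k 12 mem12]))
        ≃ₗ[↥(cnsRing k)]
        (↥(Ideal.span {tp k 5 mem5, tp k 12 mem12, tp k 13 mem13, tp k 14 mem14}) ×
          ↥(Ideal.span {tp k 5 mem5, tp k 12 mem12, tp k 13 mem13, tp k 14 mem14})))
    ∧ traceIdeal ↥(cnsRing k)
        ↥(Ideal.span {tp k 5 mem5, tp k 12 mem12, tp k 13 mem13, tp k 14 mem14}) =
      Ideal.span {tp k 5 mem5, tp k 6 mem6, tp k 13 mem13, tp k 14 mem14} := by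
  constructor
  · exact ⟨theEquiv k⟩
  · exact trace_eq_m
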